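/- Let S₁, ..., S_m ⊂ ℝⁿ be closed convex sets each containing the closed ball of radius δ > 0 around the origin. Then for every x ∈ ℝⁿ, dist(x, ∩ᵢ Sᵢ) ≤ (‖x‖/δ)·maxᵢ dist(x, Sᵢ). -/

import Mathlib

/-- If closed convex sets `S₁, …, S_m ⊂ ℝⁿ` each contain the closed ball of radius `δ > 0`
around the origin, then `dist(x, ∩ᵢ Sᵢ) ≤ (‖x‖/δ)·maxᵢ dist(x, Sᵢ)` for every `x`. -/
theorem dist_inter_le {n m : ℕ} (hm : 0 < m) (S : Fin m → Set (EuclideanSpace ℝ (Fin n)))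
    (hclosed : ∀ i, IsClosed (S i)) (hconv : ∀ i, Convex ℝ (S i))
    (δ : ℝ) (hδ : 0 < δ) (hball : ∀ i, Metric.closedBall 0 δ ⊆ S i)
    (x : EuclideanSpace ℝ (Fin n)) :
    Metric.infDist x (⋂ i, S i) ≤ (‖x‖ / δ) * ⨆ i, Metric.infDist x (S i) := by
  haveI : Nonempty (Fin m) := ⟨⟨0, hm⟩⟩
  set d := ⨆ i, Metric.infDist x (S i) with hd
  have hdi : ∀ i, Metric.infDist x (S i) ≤ d := fun i =>
    le_ciSup (f := fun i => Metric.infDist x (S i)) (Set.Finite.bddAbove (Set.finite_range _)) i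
  have hd0 : 0 ≤ d := le_trans Metric.infDist_nonneg (hdi ⟨0, hm⟩)
  rcases eq_or_lt_of_le hd0 with h0 | hdpos
  · -- d = 0 : x is in every Sᵢ
    have hx : x ∈ ⋂ i, S i := by
      refine Set.mem_iInter.2 fun i => ?_
      have hzero : Metric.infDist x (S i) = 0 :=
        le_antisymm (h0 ▸ hdi i) Metric.infDist_nonneg
      have hne : (S i).Nonempty := ⟨0, hball i (Metric.mem_closedBall_self hδ.le)⟩
      rw [← (hclosed i).closure_eq]
      exact (Metric.mem_closure_iff_infDist_zero hne).2 hzero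
    rw [Metric.infDist_zero_of_mem hx, ← h0, mul_zero]
  · set lam := δ / (δ + d) with hlam
    have hδd : 0 < δ + d := by linarith
    have hlam0 : 0 < lam := div_pos hδ hδd
    have hlam1 : lam < 1 := (div_lt_one hδd).2 (by linarith)
    have hy : lam • x ∈ ⋂ i, S i := by
      refine Set.mem_iInter.2 fun i => ?_
      have hne : (S i).Nonempty := ⟨0, hball i (Metric.mem_closedBall_self hδ.le)⟩
      obtain ⟨p, hp, hdp⟩ := (hclosed i).exists_infDist_eq_dist hne x
      have hxp : ‖x - p‖ ≤ d := by
        rw [← dist_eq_norm]; exact hdp ▸ hdi i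
      have hbmem : (δ / d) • (x - p) ∈ S i := by
        apply hball i
        rw [Metric.mem_closedBall, dist_zero_right, norm_smul, Real.norm_eq_abs,
          abs_of_pos (div_pos hδ hdpos)]
        calc (δ / d) * ‖x - p‖ ≤ (δ / d) * d := by gcongr
          _ = δ := div_mul_cancel₀ δ hdpos.ne'
      have hcomb := hconv i hp hbmem hlam0.le (by linarith : (0:ℝ) ≤ 1 - lam) (by ring)
      have heq : lam • p + (1 - lam) • ((δ / d) • (x - p)) = lam • x := by
        rw [smul_smul]
        have h1 : (1 - lam) * (δ / d) = lam := by
          rw [hlam]; field_simp; ring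
        rw [h1, smul_sub]
        abel
      rwa [heq] at hcomb
    have hkey : Metric.infDist x (⋂ i, S i) ≤ (1 - lam) * ‖x‖ := by
      calc Metric.infDist x (⋂ i, S i) ≤ dist x (lam • x) :=
            Metric.infDist_le_dist_of_mem hy
        _ = (1 - lam) * ‖x‖ := by
            rw [dist_eq_norm]
            nth_rewrite 1 [← one_smul ℝ x]
            rw [← sub_smul, norm_smul, Real.norm_eq_abs, abs_of_pos (by linarith)]
    refine hkey.trans ?_
    have h1lam : 1 - lam = d / (δ + d) := by rw [hlam]; field_simp; ring
    rw [h1lam]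
    calc d / (δ + d) * ‖x‖ ≤ d / δ * ‖x‖ := by gcongr <;> linarith
      _ = ‖x‖ / δ * d := by ring
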